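/- arXiv:2311.18090 — 3 statements merged into one kernel-verified Lean document; each statement's English description precedes it below -/
import Mathlib

section
/- Let (Ω, P) be a probability space, let s ≥ 2 be a natural number, let N : Ω → ℕ be a geometric random variable with parameter 1/s (counting failures before the first success), i.e. P(N = k) = (1/s)·(1 − 1/s)^k for all k ∈ ℕ, let (Z_i)_{i∈ℕ} be an i.i.d. sequence of nonnegative integrable real random variables with common mean μ, with the sequence (Z_i) independent of N, and let t ≥ 0 be a real number. Define the total hitting time T = t·(N + 1) + Σ_{i<N} Z_i. Then T is integrable and E[T] = t + (s − 1)·(t + μ). -/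
open MeasureTheory ProbabilityTheory

/-- Renewal model: with `N` geometric with parameter `1/s` (failures before the first
success), `(Z i)` i.i.d. nonnegative integrable with mean `μ` and independent of `N`,
and `t ≥ 0`, the total hitting time `T = t * (N + 1) + ∑ i < N, Z i` is integrable
with expectation `t + (s - 1) * (t + μ)`. -/
theorem hitting_time_renewal_mean
    {Ω : Type*} [MeasurableSpace Ω] (P : Measure Ω) [IsProbabilityMeasure P]
    (s : ℕ) (hs : 2 ≤ s)
    (N : Ω → ℕ) (hNmeas : Measurable N)
    (hNgeo : ∀ k : ℕ, P {ω | N ω = k}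
      = ENNReal.ofReal ((1 / (s : ℝ)) * (1 - 1 / (s : ℝ)) ^ k))
    (Z : ℕ → Ω → ℝ) (μ : ℝ)
    (hZmeas : ∀ i, Measurable (Z i))
    (hZnn : ∀ i, ∀ ω, 0 ≤ Z i ω)
    (hZint : ∀ i, Integrable (Z i) P)
    (hZmean : ∀ i, ∫ ω, Z i ω ∂P = μ)
    (hZindep : iIndepFun Z P)
    (hZident : ∀ i, IdentDistrib (Z i) (Z 0) P P)
    (hZN : IndepFun (fun ω => fun i => Z i ω) N P)
    (t : ℝ) (ht : 0 ≤ t)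
    (T : Ω → ℝ)
    (hT : ∀ ω, T ω = t * ((N ω : ℝ) + 1) + ∑ i ∈ Finset.range (N ω), Z i ω) :
    Integrable T P ∧ ∫ ω, T ω ∂P = t + ((s : ℝ) - 1) * (t + μ) := by
  have hs2 : (2:ℝ) ≤ (s:ℝ) := by exact_mod_cast hs
  have hs0 : (0:ℝ) < (s:ℝ) := by linarith
  set q : ℝ := 1 - 1/(s:ℝ) with hqdef
  have hp0 : (0:ℝ) < 1/(s:ℝ) := by positivity
  have hp1 : 1/(s:ℝ) ≤ 1/2 := by
    rw [div_le_div_iff₀ hs0 (by norm_num)]; linarith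
  have hq0 : 0 ≤ q := by rw [hqdef]; linarith
  have hq1 : q < 1 := by rw [hqdef]; linarith
  have h1q : 1 - q = 1/(s:ℝ) := by rw [hqdef]; ring
  have hμ0 : 0 ≤ μ := by
    rw [← hZmean 0]; exact integral_nonneg (hZnn 0)
  -- the measurable sets {N > i}
  set A : ℕ → Set Ω := fun i => {ω | i < N ω} with hAdef
  have hA : ∀ i, MeasurableSet (A i) := fun i => hNmeas measurableSet_Ioi
  -- P (A i) = q ^ (i+1)
  have hPA : ∀ i, P (A i) = ENNReal.ofReal (q ^ (i+1)) := by
    intro i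
    have hunion : A i = ⋃ j, {ω | N ω = i + 1 + j} := by
      ext ω
      simp only [hAdef, Set.mem_setOf_eq, Set.mem_iUnion]
      constructor
      · intro h; exact ⟨N ω - (i+1), by omega⟩
      · rintro ⟨j, hj⟩; omega
    have hdisj : Pairwise (Function.onFun Disjoint fun j : ℕ => {ω | N ω = i + 1 + j}) := by
      intro a b hab
      rw [Function.onFun, Set.disjoint_left]
      intro ω h1 h2
      simp only [Set.mem_setOf_eq] at h1 h2
      omega
    have hmeas : ∀ j : ℕ, MeasurableSet {ω | N ω = i + 1 + j} :=
      fun j => hNmeas (measurableSet_singleton _)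
    have hsummable : Summable (fun j : ℕ => (1/(s:ℝ)) * q ^ (i+1+j)) := by
      have he : (fun j : ℕ => (1/(s:ℝ)) * q ^ (i+1+j))
          = fun j : ℕ => ((1/(s:ℝ)) * q ^ (i+1)) * q ^ j := by
        funext j; rw [pow_add]; ring
      rw [he]
      exact (summable_geometric_of_lt_one hq0 hq1).mul_left _
    have hsum : ∑' j : ℕ, (1/(s:ℝ)) * q ^ (i+1+j) = q ^ (i+1) := by
      have he : ∀ j : ℕ, (1/(s:ℝ)) * q ^ (i+1+j)
          = ((1/(s:ℝ)) * q ^ (i+1)) * q ^ j := by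
        intro j; rw [pow_add]; ring
      rw [tsum_congr he, tsum_mul_left, tsum_geometric_of_lt_one hq0 hq1, h1q,
        one_div, inv_inv]
      field_simp
    rw [hunion, measure_iUnion hdisj hmeas]
    simp_rw [hNgeo]
    rw [← ENNReal.ofReal_tsum_of_nonneg (fun j => by positivity) hsummable, hsum]
  -- the indicator of {N > i}
  set c : ℕ → Ω → ℝ := fun i ω => if i < N ω then (1:ℝ) else 0 with hcdef
  have hc_eq : ∀ i, c i = (A i).indicator (fun _ => (1:ℝ)) := by
    intro i; funext ω
    simp [hcdef, Set.indicator_apply, hAdef, Set.mem_setOf_eq]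
  have hc_meas : ∀ i, Measurable (c i) := by
    intro i
    exact (measurable_of_countable (fun n : ℕ => if i < n then (1:ℝ) else 0)).comp hNmeas
  have hc_int : ∀ i, Integrable (c i) P := by
    intro i; rw [hc_eq i]
    exact (integrable_const (1:ℝ)).indicator (hA i)
  have hc_val : ∀ i, ∫ ω, c i ω ∂P = q ^ (i+1) := by
    intro i
    rw [show (fun ω => c i ω) = c i from rfl, hc_eq i, integral_indicator_const _ (hA i),
      measureReal_def, hPA i, smul_eq_mul, mul_one, ENNReal.toReal_ofReal (by positivity)]
  -- independence of Z i and c i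
  have hindep : ∀ i, IndepFun (Z i) (c i) P := by
    intro i
    exact hZN.comp (measurable_pi_apply i)
      (measurable_of_countable (fun n : ℕ => if i < n then (1:ℝ) else 0))
  -- the summands f i
  set f : ℕ → Ω → ℝ := fun i ω => if i < N ω then t + Z i ω else 0 with hfdef
  have hf_eq : ∀ i, f i = fun ω => t * c i ω + Z i ω * c i ω := by
    intro i; funext ω
    by_cases h : i < N ω <;> simp [hfdef, hcdef, h]
  have hf_nn : ∀ i ω, 0 ≤ f i ω := by
    intro i ω
    by_cases h : i < N ω <;> simp [hfdef, h]
    exact add_nonneg ht (hZnn i ω)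
  have hZc_int : ∀ i, Integrable (fun ω => Z i ω * c i ω) P :=
    fun i => (hindep i).integrable_mul (hZint i) (hc_int i)
  have hZc_val : ∀ i, ∫ ω, Z i ω * c i ω ∂P = μ * q ^ (i+1) := by
    intro i
    have := (hindep i).integral_mul_eq_mul_integral (hZint i).aestronglyMeasurable (hc_int i).aestronglyMeasurable
    calc ∫ ω, Z i ω * c i ω ∂P = ∫ ω, (Z i * c i) ω ∂P := rfl
      _ = (∫ ω, Z i ω ∂P) * ∫ ω, c i ω ∂P := this
      _ = μ * q ^ (i+1) := by rw [hZmean i, hc_val i]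
  have hf_int : ∀ i, Integrable (f i) P := by
    intro i; rw [hf_eq i]
    exact ((hc_int i).const_mul t).add (hZc_int i)
  have hf_val : ∀ i, ∫ ω, f i ω ∂P = (t + μ) * q ^ (i+1) := by
    intro i
    rw [show (fun ω => f i ω) = f i from rfl, hf_eq i,
      integral_add ((hc_int i).const_mul t) (hZc_int i), integral_const_mul,
      hc_val i, hZc_val i]
    ring
  -- pointwise sum
  set G : Ω → ℝ := fun ω => t * (N ω : ℝ) + ∑ i ∈ Finset.range (N ω), Z i ω with hGdef
  have hGsum : ∀ ω, HasSum (fun i => f i ω) (G ω) := by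
    intro ω
    have h0 : ∀ i ∉ Finset.range (N ω), f i ω = 0 := by
      intro i hi
      rw [Finset.mem_range, not_lt] at hi
      simp [hfdef, Nat.not_lt.mpr hi]
    have h1 : HasSum (fun i => f i ω) (∑ i ∈ Finset.range (N ω), f i ω) :=
      hasSum_sum_of_ne_finset_zero h0
    have h2 : ∑ i ∈ Finset.range (N ω), f i ω = G ω := by
      have hcg : ∀ i ∈ Finset.range (N ω), f i ω = t + Z i ω := by
        intro i hi
        rw [Finset.mem_range] at hi
        simp [hfdef, hi]
      rw [Finset.sum_congr rfl hcg, Finset.sum_add_distrib, Finset.sum_const,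
        Finset.card_range, nsmul_eq_mul]
      show _ = t * (N ω : ℝ) + ∑ i ∈ Finset.range (N ω), Z i ω
      ring
    rwa [h2] at h1
  have hGt : ∀ ω, T ω = t + G ω := by
    intro ω; rw [hT ω, hGdef]; ring
  -- measurability of G
  have hGmeas : Measurable G := by
    have hF : Measurable (fun p : Ω × ℕ => t * (p.2:ℝ) + ∑ i ∈ Finset.range p.2, Z i p.1) := by
      apply measurable_from_prod_countable_left
      intro k
      show Measurable fun x : Ω => t * (k : ℝ) + ∑ i ∈ Finset.range k, Z i x
      exact measurable_const.add (Finset.measurable_sum _ (fun i _ => hZmeas i))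
    exact hF.comp (measurable_id.prodMk hNmeas)
  have hGnn : ∀ ω, 0 ≤ G ω := by
    intro ω
    exact add_nonneg (by positivity) (Finset.sum_nonneg fun i _ => hZnn i ω)
  -- summability of the integrals
  have hsummable2 : Summable (fun i : ℕ => (t+μ) * q ^ (i+1)) := by
    have he : (fun i : ℕ => (t+μ) * q ^ (i+1)) = fun i : ℕ => ((t+μ) * q) * q ^ i := by
      funext i; rw [pow_succ]; ring
    rw [he]
    exact (summable_geometric_of_lt_one hq0 hq1).mul_left _
  have htsum2 : ∑' i : ℕ, (t+μ) * q ^ (i+1) = (t+μ) * ((s:ℝ) - 1) := by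
    have he : ∀ i : ℕ, (t+μ) * q ^ (i+1) = ((t+μ) * q) * q ^ i := by
      intro i; rw [pow_succ]; ring
    rw [tsum_congr he, tsum_mul_left, tsum_geometric_of_lt_one hq0 hq1, h1q,
      one_div, inv_inv]
    rw [hqdef]
    field_simp
  -- integrability of G
  have hGfin : ∫⁻ ω, ‖G ω‖₊ ∂P ≠ ⊤ := by
    have e1 : ∀ ω, (‖G ω‖₊ : ENNReal) = ∑' i, ENNReal.ofReal (f i ω) := by
      intro ω
      rw [show (‖G ω‖₊ : ENNReal) = ‖G ω‖ₑ from rfl, Real.enorm_eq_ofReal (hGnn ω),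
        ← (hGsum ω).tsum_eq,
        ENNReal.ofReal_tsum_of_nonneg (fun i => hf_nn i ω) (hGsum ω).summable]
    calc ∫⁻ ω, ‖G ω‖₊ ∂P = ∫⁻ ω, ∑' i, ENNReal.ofReal (f i ω) ∂P :=
            lintegral_congr e1
      _ = ∑' i, ∫⁻ ω, ENNReal.ofReal (f i ω) ∂P := by
            refine lintegral_tsum (fun i => ?_)
            have : Measurable (f i) := by
              rw [hf_eq i]
              exact (measurable_const.mul (hc_meas i)).add ((hZmeas i).mul (hc_meas i))
            exact this.ennreal_ofReal.aemeasurable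
      _ = ∑' i, ENNReal.ofReal ((t+μ) * q ^ (i+1)) := by
            refine tsum_congr (fun i => ?_)
            rw [← ofReal_integral_eq_lintegral_ofReal (hf_int i) (ae_of_all _ (hf_nn i)),
              hf_val i]
      _ ≠ ⊤ := by
            rw [← ENNReal.ofReal_tsum_of_nonneg (fun i => by positivity) hsummable2]
            exact ENNReal.ofReal_ne_top
  have hGint : Integrable G P :=
    ⟨hGmeas.aestronglyMeasurable, lt_top_iff_ne_top.2 hGfin⟩
  have hTeq : T = fun ω => t + G ω := funext hGt
  have hTint : Integrable T P := by
    rw [hTeq]; exact (integrable_const t).add hGint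
  refine ⟨hTint, ?_⟩
  -- compute the integral of G
  have hGval : ∫ ω, G ω ∂P = (t+μ) * ((s:ℝ) - 1) := by
    have hnorm : ∀ i, ∫ ω, ‖f i ω‖ ∂P = (t+μ) * q ^ (i+1) := by
      intro i
      rw [← hf_val i]
      congr 1; funext ω
      exact Real.norm_of_nonneg (hf_nn i ω)
    have hsm : Summable (fun i => ∫ ω, ‖f i ω‖ ∂P) := by
      have : (fun i => ∫ ω, ‖f i ω‖ ∂P) = fun i : ℕ => (t+μ) * q ^ (i+1) := funext hnorm
      rw [this]; exact hsummable2
    have h1 := integral_tsum_of_summable_integral_norm hf_int hsm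
    have h2 : ∫ ω, (∑' i, f i ω) ∂P = ∫ ω, G ω ∂P :=
      integral_congr_ae (ae_of_all _ (fun ω => (hGsum ω).tsum_eq))
    rw [h2] at h1
    rw [← h1, tsum_congr hf_val, htsum2]
  rw [hTeq, integral_add (integrable_const t) hGint, integral_const, probReal_univ,
    smul_eq_mul, one_mul, hGval]
  ring
end

section
/- (Hitting time of SA+FV.) Let (Ω, P) be a probability space; let s, l, a, b be natural numbers with s = l + a + b and l ≥ 1 and s ≥ 2; let C_s, C_a, C_l, D, α be positive reals. Let N : Ω → ℕ be a geometric random variable with parameter 1/s (counting failures before the first success), i.e. P(N = k) = (1/s)·(1 − 1/s)^k for all k ∈ ℕ, and let (Z_i)_{i∈ℕ} be an i.i.d. sequence of nonnegative integrable real random variables, independent of N, with common mean μ = (a·C_a/α + (l − 1)·C_l/α)/s. Define the total hitting time T = (C_s·D·α^{−4})·(N + 1) + Σ_{i<N} Z_i. Then T is integrable and E[T] = C_s·D·α^{−4} + (s − 1)·[ C_s·D·α^{−4} + a·C_a/(s·α) + (l − 1)·C_l/(s·α) ]. -/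
open MeasureTheory ProbabilityTheory
open scoped ENNReal NNReal

/-- Hitting time of simulated annealing with Fleming-Viot: with `s = l + a + b`
stationary points, search-phase duration `C_s * D * α⁻⁴`, mean escape cost per failure
`μ = (a * C_a / α + (l - 1) * C_l / α) / s` (barren plateaus escaped immediately), the
expected hitting time of the global minimizer is
`C_s * D * α⁻⁴ + (s - 1) * (C_s * D * α⁻⁴ + a * C_a / (s * α) + (l - 1) * C_l / (s * α))`. -/
theorem hitting_time_SA_FV
    {Ω : Type*} [MeasurableSpace Ω] (P : Measure Ω) [IsProbabilityMeasure P]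
    (s l a b : ℕ) (hsum : s = l + a + b) (hl : 1 ≤ l) (hs : 2 ≤ s)
    (Cs Ca Cl D α : ℝ)
    (hCs : 0 < Cs) (hCa : 0 < Ca) (hCl : 0 < Cl) (hD : 0 < D) (hα : 0 < α)
    (N : Ω → ℕ) (hNmeas : Measurable N)
    (hNgeo : ∀ k : ℕ, P {ω | N ω = k}
      = ENNReal.ofReal ((1 / (s : ℝ)) * (1 - 1 / (s : ℝ)) ^ k))
    (Z : ℕ → Ω → ℝ)
    (hZmeas : ∀ i, Measurable (Z i))
    (hZnn : ∀ i, ∀ ω, 0 ≤ Z i ω)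
    (hZint : ∀ i, Integrable (Z i) P)
    (hZmean : ∀ i, ∫ ω, Z i ω ∂P
      = ((a : ℝ) * Ca / α + ((l : ℝ) - 1) * Cl / α) / (s : ℝ))
    (hZindep : iIndepFun Z P)
    (hZident : ∀ i, IdentDistrib (Z i) (Z 0) P P)
    (hZN : IndepFun (fun ω => fun i => Z i ω) N P)
    (T : Ω → ℝ)
    (hT : ∀ ω, T ω = (Cs * D * α ^ (-4 : ℤ)) * ((N ω : ℝ) + 1)
      + ∑ i ∈ Finset.range (N ω), Z i ω) :
    Integrable T P ∧
      ∫ ω, T ω ∂P = Cs * D * α ^ (-4 : ℤ)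
        + ((s : ℝ) - 1) * (Cs * D * α ^ (-4 : ℤ)
          + (a : ℝ) * Ca / ((s : ℝ) * α) + ((l : ℝ) - 1) * Cl / ((s : ℝ) * α)) := by
  set c : ℝ := Cs * D * α ^ (-4 : ℤ) with hc_def
  set μv : ℝ := ((a : ℝ) * Ca / α + ((l : ℝ) - 1) * Cl / α) / (s : ℝ) with hμ_def
  set q : ℝ := 1 - 1 / (s : ℝ) with hq_def
  have hs2 : (2 : ℝ) ≤ (s : ℝ) := by exact_mod_cast hs
  have hs0 : (0 : ℝ) < (s : ℝ) := by linarith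
  have hsne : (s : ℝ) ≠ 0 := ne_of_gt hs0
  have hp0 : (0 : ℝ) < 1 / (s : ℝ) := by positivity
  have hp1 : 1 / (s : ℝ) ≤ 1 / 2 := by
    apply one_div_le_one_div_of_le <;> linarith
  have hq0 : 0 ≤ q := by rw [hq_def]; linarith
  have hq1 : q < 1 := by rw [hq_def]; linarith
  have hc0 : 0 < c := by
    rw [hc_def]; positivity
  have hl1 : (1 : ℝ) ≤ (l : ℝ) := by exact_mod_cast hl
  have hμ0 : 0 ≤ μv := by
    rw [hμ_def]
    apply div_nonneg _ hs0.le
    have h1 : 0 ≤ (a : ℝ) * Ca / α := by positivity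
    have h2 : 0 ≤ ((l : ℝ) - 1) * Cl / α := by
      apply div_nonneg _ hα.le
      exact mul_nonneg (by linarith) hCl.le
    linarith
  -- the summand functions
  set f : ℕ → Ω → ℝ := fun i ω => (if i < N ω then (1 : ℝ) else 0) * (c + Z i ω) with hf_def
  have hfnn : ∀ i ω, 0 ≤ f i ω := by
    intro i ω
    apply mul_nonneg
    · split <;> norm_num
    · have := hZnn i ω; linarith
  have hψmeas : ∀ i, Measurable (fun ω => if i < N ω then (1 : ℝ) else 0) := by
    intro i
    exact (measurable_from_top (f := fun n : ℕ => if i < n then (1:ℝ) else 0)).comp hNmeas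
  have hfmeas : ∀ i, Measurable (f i) := fun i =>
    (hψmeas i).mul (measurable_const.add (hZmeas i))
  have hAmeas : ∀ i : ℕ, MeasurableSet {ω | i < N ω} := fun i => hNmeas measurableSet_Ioi
  -- probability of the event {i < N}
  have hgeom : ∀ n : ℕ, ∑ k ∈ Finset.range n, (1 / (s : ℝ)) * q ^ k = 1 - q ^ n := by
    intro n
    rw [← Finset.mul_sum, geom_sum_eq (ne_of_lt hq1)]
    have hq1' : q - 1 = -(1 / (s : ℝ)) := by rw [hq_def]; ring
    rw [hq1']
    field_simp
    ring
  have hqpow1 : ∀ n : ℕ, q ^ n ≤ 1 := fun n => pow_le_one₀ hq0 hq1.le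
  have hPA : ∀ i : ℕ, P {ω | i < N ω} = ENNReal.ofReal (q ^ (i + 1)) := by
    intro i
    have hAc : {ω | i < N ω}ᶜ = ⋃ k ∈ Finset.range (i + 1), {ω | N ω = k} := by
      ext ω
      simp only [Set.mem_compl_iff, Set.mem_setOf_eq, Set.mem_iUnion, Finset.mem_range]
      constructor
      · intro h; exact ⟨N ω, by omega, rfl⟩
      · rintro ⟨k, hk, hNk⟩; omega
    have hdisj : (Finset.range (i + 1) : Set ℕ).PairwiseDisjoint
        (fun k => {ω | N ω = k}) := by
      intro x _ y _ hxy
      simp only [Function.onFun, Set.disjoint_left]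
      intro ω h1 h2
      exact hxy (by simp only [Set.mem_setOf_eq] at h1 h2; rw [← h1, ← h2])
    have hPc : P {ω | i < N ω}ᶜ = ENNReal.ofReal (1 - q ^ (i + 1)) := by
      rw [hAc, measure_biUnion_finset hdisj (fun k _ => hNmeas (measurableSet_singleton k))]
      have : ∀ k ∈ Finset.range (i + 1), P {ω | N ω = k}
          = ENNReal.ofReal ((1 / (s : ℝ)) * q ^ k) := by
        intro k _; rw [hNgeo k]
      rw [Finset.sum_congr rfl this,
        ← ENNReal.ofReal_sum_of_nonneg (fun k _ => by positivity), hgeom]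
    have hmc := measure_compl (hAmeas i) (measure_ne_top P _)
    rw [hPc, measure_univ] at hmc
    have key : P {ω | i < N ω} = 1 - ENNReal.ofReal (1 - q ^ (i + 1)) := by
      rw [hmc, ENNReal.sub_sub_cancel ENNReal.one_ne_top prob_le_one]
    rw [key, ← ENNReal.ofReal_one,
      ← ENNReal.ofReal_sub 1 (by linarith [hqpow1 (i + 1)] : (0:ℝ) ≤ 1 - q ^ (i + 1))]
    norm_num
  -- independence
  have hind : ∀ i : ℕ, IndepFun (fun ω => c + Z i ω)
      (fun ω => if i < N ω then (1 : ℝ) else 0) P := by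
    intro i
    exact hZN.comp ((measurable_pi_apply i).const_add c)
      (measurable_from_top (f := fun n : ℕ => if i < n then (1:ℝ) else 0))
  have hψint : ∀ i : ℕ, Integrable (fun ω => if i < N ω then (1 : ℝ) else 0) P := by
    intro i
    have : (fun ω => if i < N ω then (1 : ℝ) else 0)
        = Set.indicator {ω | i < N ω} (fun _ => (1 : ℝ)) := by
      funext ω; simp [Set.indicator_apply]
    rw [this]
    exact (integrable_const (1 : ℝ)).indicator (hAmeas i)
  have hψval : ∀ i : ℕ, ∫ ω, (if i < N ω then (1 : ℝ) else 0) ∂P = q ^ (i + 1) := by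
    intro i
    have h1 : (fun ω => if i < N ω then (1 : ℝ) else 0)
        = Set.indicator {ω | i < N ω} (fun _ => (1 : ℝ)) := by
      funext ω; simp [Set.indicator_apply]
    rw [h1, integral_indicator_const (1 : ℝ) (hAmeas i), measureReal_def, hPA i, smul_eq_mul, mul_one,
      ENNReal.toReal_ofReal (by positivity)]
  have hYint : ∀ i : ℕ, Integrable (fun ω => c + Z i ω) P := fun i =>
    (integrable_const c).add (hZint i)
  have hYval : ∀ i : ℕ, ∫ ω, (c + Z i ω) ∂P = c + μv := by
    intro i
    rw [integral_add (integrable_const c) (hZint i), integral_const, hZmean i, measureReal_def, measure_univ]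
    simp [hμ_def]
  have hfint : ∀ i, Integrable (f i) P := by
    intro i
    have := ((hind i).symm).integrable_mul (hψint i) (hYint i)
    exact this
  have hfval : ∀ i, ∫ ω, f i ω ∂P = (c + μv) * q ^ (i + 1) := by
    intro i
    have hthis := ((hind i).symm).integral_mul_eq_mul_integral (hψint i).aestronglyMeasurable
      (hYint i).aestronglyMeasurable
    calc ∫ ω, f i ω ∂P
        = integral P ((fun ω => if i < N ω then (1:ℝ) else 0) * (fun ω => c + Z i ω)) := rfl
      _ = (∫ ω, (if i < N ω then (1:ℝ) else 0) ∂P) * ∫ ω, (c + Z i ω) ∂P := hthis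
      _ = (c + μv) * q ^ (i + 1) := by rw [hψval i, hYval i]; ring
  have hflin : ∀ i, ∫⁻ ω, ‖f i ω‖₊ ∂P = ENNReal.ofReal ((c + μv) * q ^ (i + 1)) := by
    intro i
    have h1 : ∀ ω, ((‖f i ω‖₊ : ℝ≥0∞)) = ENNReal.ofReal (f i ω) := fun ω =>
      Real.enorm_eq_ofReal (hfnn i ω)
    simp_rw [h1]
    rw [← ofReal_integral_eq_lintegral_ofReal (hfint i) (ae_of_all _ (hfnn i)), hfval i]
  -- real geometric series
  have hsummable : Summable (fun i : ℕ => (c + μv) * q ^ (i + 1)) := by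
    exact ((summable_geometric_of_lt_one hq0 hq1).mul_left ((c + μv) * q)).congr
      (fun i => by ring)
  have h1q : 1 - q = 1 / (s : ℝ) := by rw [hq_def]; ring
  have htsum : ∑' i : ℕ, (c + μv) * q ^ (i + 1) = (c + μv) * ((s : ℝ) - 1) := by
    have h2 : ∀ i : ℕ, (c + μv) * q ^ (i + 1) = ((c + μv) * q) * q ^ i := by
      intro i; rw [pow_succ']; ring
    rw [tsum_congr h2, tsum_mul_left, tsum_geometric_of_lt_one hq0 hq1, h1q]
    have hx : (1 / (s : ℝ))⁻¹ = (s : ℝ) := by rw [one_div, inv_inv]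
    rw [hx, hq_def]
    have hy : (1 - 1 / (s : ℝ)) * (s : ℝ) = (s : ℝ) - 1 := by
      field_simp
    calc (c + μv) * (1 - 1 / (s : ℝ)) * (s : ℝ)
        = (c + μv) * ((1 - 1 / (s : ℝ)) * (s : ℝ)) := by ring
      _ = (c + μv) * ((s : ℝ) - 1) := by rw [hy]
  have hlinsum : ∑' i : ℕ, ∫⁻ ω, ‖f i ω‖₊ ∂P
      = ENNReal.ofReal ((c + μv) * ((s : ℝ) - 1)) := by
    simp_rw [hflin]
    rw [← ENNReal.ofReal_tsum_of_nonneg (fun i => by positivity) hsummable, htsum]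
  -- pointwise identification of T
  have hfzero : ∀ ω, ∀ i ∉ Finset.range (N ω), f i ω = 0 := by
    intro ω i hi
    simp only [Finset.mem_range, not_lt] at hi
    rw [hf_def]
    simp only [if_neg (by omega : ¬ i < N ω), zero_mul]
  have hg_sum : ∀ ω, ∑' i, f i ω = ∑ i ∈ Finset.range (N ω), (c + Z i ω) := by
    intro ω
    rw [tsum_eq_sum (hfzero ω)]
    apply Finset.sum_congr rfl
    intro i hi
    rw [hf_def]
    simp only [if_pos (Finset.mem_range.mp hi), one_mul]
  have hTg : ∀ ω, T ω = c + ∑' i, f i ω := by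
    intro ω
    rw [hT ω, hg_sum ω, Finset.sum_add_distrib, Finset.sum_const, Finset.card_range,
      nsmul_eq_mul]
    ring
  -- measurability and integrability of the series
  have hg_summable : ∀ ω, Summable (fun i => f i ω) := fun ω =>
    summable_of_ne_finset_zero (hfzero ω)
  have hg_ofReal : ∀ ω, ENNReal.ofReal (∑' i, f i ω) = ∑' i, ENNReal.ofReal (f i ω) :=
    fun ω => ENNReal.ofReal_tsum_of_nonneg (fun i => hfnn i ω) (hg_summable ω)
  have hg_meas : Measurable (fun ω => ∑' i, f i ω) := by
    have heq : (fun ω => ∑' i, f i ω)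
        = fun ω => (∑' i, ENNReal.ofReal (f i ω)).toReal := by
      funext ω
      rw [← hg_ofReal ω, ENNReal.toReal_ofReal (tsum_nonneg (fun i => hfnn i ω))]
    rw [heq]
    exact (Measurable.ennreal_tsum (fun i => (hfmeas i).ennreal_ofReal)).ennreal_toReal
  have hg_lin : ∫⁻ ω, ‖∑' i, f i ω‖₊ ∂P = ENNReal.ofReal ((c + μv) * ((s : ℝ) - 1)) := by
    have h1 : ∀ ω, ((‖∑' i, f i ω‖₊ : ℝ≥0∞)) = ∑' i, ENNReal.ofReal (f i ω) := by
      intro ω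
      exact (Real.enorm_eq_ofReal (tsum_nonneg (fun i => hfnn i ω))).trans (hg_ofReal ω)
    simp_rw [h1]
    rw [lintegral_tsum (fun i => ((hfmeas i).ennreal_ofReal).aemeasurable)]
    rw [← hlinsum]
    apply tsum_congr
    intro i
    apply lintegral_congr
    intro ω
    exact (Real.enorm_eq_ofReal (hfnn i ω)).symm
  have hg_int : Integrable (fun ω => ∑' i, f i ω) P := by
    refine ⟨hg_meas.aestronglyMeasurable, ?_⟩
    rw [HasFiniteIntegral]
    exact lt_of_eq_of_lt hg_lin ENNReal.ofReal_lt_top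
  have hT_eq : T = fun ω => c + ∑' i, f i ω := funext hTg
  have hTint : Integrable T P := by
    rw [hT_eq]
    exact (integrable_const c).add hg_int
  refine ⟨hTint, ?_⟩
  have hg_integral : ∫ ω, (∑' i, f i ω) ∂P = (c + μv) * ((s : ℝ) - 1) := by
    rw [integral_tsum (fun i => (hfmeas i).aestronglyMeasurable)
      (by exact ne_of_eq_of_ne hlinsum ENNReal.ofReal_ne_top)]
    rw [tsum_congr hfval, htsum]
  have : ∫ ω, T ω ∂P = c + (c + μv) * ((s : ℝ) - 1) := by
    rw [hT_eq, integral_add (integrable_const c) hg_int, integral_const, measureReal_def, measure_univ,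
      hg_integral]
    simp
  rw [this]
  have hμv : μv = (a : ℝ) * Ca / ((s : ℝ) * α) + ((l : ℝ) - 1) * Cl / ((s : ℝ) * α) := by
    rw [hμ_def, ← add_div ((a : ℝ) * Ca) (((l : ℝ) - 1) * Cl) α, div_div, add_div, mul_comm α ((s : ℝ))]
  rw [hμv]
  ring
end

section
/- (Hitting time of SA without FV.) Let (Ω, P) be a probability space; let s, l, a, b be natural numbers with s = l + a + b, l ≥ 1, b ≥ 1, and s ≥ 2; let C_s, C_a, C_l, C_f, D, α be positive reals and let B ∈ (0, 1). Let N : Ω → ℕ be a geometric random variable with parameter 1/s (counting failures before the first success), i.e. P(N = k) = (1/s)·(1 − 1/s)^k for all k ∈ ℕ, and let (Z_i)_{i∈ℕ} be an i.i.d. sequence of nonnegative integrable real random variables, independent of N, with common mean μ = (a·C_a/α + (l − 1)·C_l/α + C_f·B·D/b)/s. Define the total hitting time T = (C_s·D·α^{−4})·(N + 1) + Σ_{i<N} Z_i. Then T is integrable and E[T] = C_s·D·α^{−4} + (s − 1)·[ C_s·D·α^{−4} + a·C_a/(s·α) + (l − 1)·C_l/(s·α) + C_f·B·D/(s·b) ].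 -/
open MeasureTheory ProbabilityTheory

lemma aux_integral_tsum {Ω : Type*} [MeasurableSpace Ω] (P : Measure Ω)
    (f : ℕ → Ω → ℝ) (hmeas : ∀ i, Measurable (f i)) (hnn : ∀ i ω, 0 ≤ f i ω)
    (hint : ∀ i, Integrable (f i) P) (c : ℕ → ℝ) (hc : ∀ i, ∫ ω, f i ω ∂P = c i)
    (hcs : Summable c) (W : Ω → ℝ) (hW : ∀ ω, HasSum (fun i => f i ω) (W ω)) :
    Integrable W P ∧ ∫ ω, W ω ∂P = ∑' i, c i := by
  have hcnn : ∀ i, 0 ≤ c i := fun i => (hc i) ▸ integral_nonneg (hnn i)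
  have hWt : ∀ ω, W ω = ∑' i, f i ω := fun ω => ((hW ω).tsum_eq).symm
  have hlin : ∀ i, ∫⁻ ω, ‖f i ω‖₊ ∂P = ENNReal.ofReal (c i) := by
    intro i
    rw [← hc i, ofReal_integral_eq_lintegral_ofReal (hint i) (ae_of_all _ (hnn i))]
    exact lintegral_congr fun ω => (Real.enorm_eq_ofReal (hnn i ω))
  have hkey : ∑' i, ∫⁻ ω, ‖f i ω‖₊ ∂P ≠ ⊤ := by
    simp_rw [hlin]
    rw [← ENNReal.ofReal_tsum_of_nonneg hcnn hcs]
    exact ENNReal.ofReal_ne_top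
  have hWof : ∀ ω, ENNReal.ofReal (W ω) = ∑' i, ENNReal.ofReal (f i ω) := by
    intro ω
    rw [hWt ω]
    exact ENNReal.ofReal_tsum_of_nonneg (hnn · ω) (hW ω).summable
  have hWnn : ∀ ω, 0 ≤ W ω := fun ω => (hWt ω) ▸ tsum_nonneg (hnn · ω)
  have hWmeas' : Measurable fun ω => (∑' i, ENNReal.ofReal (f i ω)).toReal :=
    (Measurable.ennreal_tsum fun i => (hmeas i).ennreal_ofReal).ennreal_toReal
  have hWmeas : Measurable W := by
    have : W = fun ω => (∑' i, ENNReal.ofReal (f i ω)).toReal := by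
      funext ω
      rw [← hWof ω, ENNReal.toReal_ofReal (hWnn ω)]
    rw [this]; exact hWmeas'
  constructor
  · refine ⟨hWmeas.aestronglyMeasurable, ?_⟩
    rw [hasFiniteIntegral_iff_ofReal (ae_of_all _ hWnn)]
    calc ∫⁻ ω, ENNReal.ofReal (W ω) ∂P = ∫⁻ ω, ∑' i, ENNReal.ofReal (f i ω) ∂P :=
          lintegral_congr fun ω => hWof ω
      _ = ∑' i, ∫⁻ ω, ENNReal.ofReal (f i ω) ∂P :=
          lintegral_tsum fun i => ((hmeas i).ennreal_ofReal).aemeasurable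
      _ < ⊤ := by
          have : ∀ i, ∫⁻ ω, ENNReal.ofReal (f i ω) ∂P = ∫⁻ ω, ‖f i ω‖₊ ∂P :=
            fun i => lintegral_congr fun ω => (Real.enorm_eq_ofReal (hnn i ω)).symm
          simp_rw [this]
          exact lt_top_iff_ne_top.2 hkey
  · calc ∫ ω, W ω ∂P = ∫ ω, ∑' i, f i ω ∂P := integral_congr_ae (ae_of_all _ hWt)
      _ = ∑' i, ∫ ω, f i ω ∂P := integral_tsum (fun i => (hint i).1) hkey
      _ = ∑' i, c i := by simp_rw [hc]

/-- Hitting time of plain simulated annealing (no Fleming-Viot): as in the FV case,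
but each visit to a barren plateau additionally costs the expected sojourn time of a
Gaussian random walk, contributing `C_f * B * D / (s * b)` per failure. -/
theorem hitting_time_SA_no_FV
    {Ω : Type*} [MeasurableSpace Ω] (P : Measure Ω) [IsProbabilityMeasure P]
    (s l a b : ℕ) (hsum : s = l + a + b) (hl : 1 ≤ l) (hb : 1 ≤ b) (hs : 2 ≤ s)
    (Cs Ca Cl Cf D α B : ℝ)
    (hCs : 0 < Cs) (hCa : 0 < Ca) (hCl : 0 < Cl) (hCf : 0 < Cf)
    (hD : 0 < D) (hα : 0 < α) (hB : B ∈ Set.Ioo (0 : ℝ) 1)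
    (N : Ω → ℕ) (hNmeas : Measurable N)
    (hNgeo : ∀ k : ℕ, P {ω | N ω = k}
      = ENNReal.ofReal ((1 / (s : ℝ)) * (1 - 1 / (s : ℝ)) ^ k))
    (Z : ℕ → Ω → ℝ)
    (hZmeas : ∀ i, Measurable (Z i))
    (hZnn : ∀ i, ∀ ω, 0 ≤ Z i ω)
    (hZint : ∀ i, Integrable (Z i) P)
    (hZmean : ∀ i, ∫ ω, Z i ω ∂P
      = ((a : ℝ) * Ca / α + ((l : ℝ) - 1) * Cl / α + Cf * B * D / (b : ℝ)) / (s : ℝ))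
    (hZindep : iIndepFun Z P)
    (hZident : ∀ i, IdentDistrib (Z i) (Z 0) P P)
    (hZN : IndepFun (fun ω => fun i => Z i ω) N P)
    (T : Ω → ℝ)
    (hT : ∀ ω, T ω = (Cs * D * α ^ (-4 : ℤ)) * ((N ω : ℝ) + 1)
      + ∑ i ∈ Finset.range (N ω), Z i ω) :
    Integrable T P ∧
      ∫ ω, T ω ∂P = Cs * D * α ^ (-4 : ℤ)
        + ((s : ℝ) - 1) * (Cs * D * α ^ (-4 : ℤ)
          + (a : ℝ) * Ca / ((s : ℝ) * α) + ((l : ℝ) - 1) * Cl / ((s : ℝ) * α)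
          + Cf * B * D / ((s : ℝ) * (b : ℝ))) := by

  -- basic numeric facts
  have hs2 : (2 : ℝ) ≤ (s : ℝ) := by exact_mod_cast hs
  have hs0 : (0 : ℝ) < (s : ℝ) := lt_of_lt_of_le two_pos hs2
  have hsne : (s : ℝ) ≠ 0 := ne_of_gt hs0
  have hb0 : (0 : ℝ) < (b : ℝ) := by exact_mod_cast hb
  have hbne : (b : ℝ) ≠ 0 := ne_of_gt hb0
  set q : ℝ := 1 - 1 / (s : ℝ) with hqdef
  have hq0 : 0 ≤ q := by
    have : 1 / (s : ℝ) ≤ 1 := by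
      rw [div_le_one hs0]; linarith
    simp only [hqdef]; linarith
  have hq1 : q < 1 := by
    have : 0 < 1 / (s : ℝ) := by positivity
    simp only [hqdef]; linarith
  have h1q : 1 - q = 1 / (s : ℝ) := by simp [hqdef]
  -- tail probabilities
  have hS : ∀ i : ℕ, MeasurableSet {ω | i < N ω} := fun i =>
    hNmeas measurableSet_Ioi
  have hPgt : ∀ i : ℕ, P {ω | i < N ω} = ENNReal.ofReal (q ^ (i + 1)) := by
    intro i
    have hset : {ω | i < N ω} = ⋃ k : ℕ, {ω | N ω = (i + 1) + k} := by
      ext ω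
      simp only [Set.mem_setOf_eq, Set.mem_iUnion]
      constructor
      · intro h; exact ⟨N ω - (i + 1), by omega⟩
      · rintro ⟨k, hk⟩; omega
    have hd : Pairwise (Function.onFun Disjoint fun k : ℕ => {ω | N ω = (i + 1) + k}) := by
      intro m n hmn
      simp only [Function.onFun, Set.disjoint_left, Set.mem_setOf_eq]
      intro ω h1 h2
      exact hmn (by omega)
    have hm : ∀ k : ℕ, MeasurableSet {ω | N ω = (i + 1) + k} := fun k =>
      hNmeas (measurableSet_singleton _)
    rw [hset, measure_iUnion hd hm]
    simp_rw [hNgeo]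
    have hfun : ∀ k : ℕ, (1 / (s : ℝ)) * q ^ ((i + 1) + k)
        = ((1 / (s : ℝ)) * q ^ (i + 1)) * q ^ k := fun k => by rw [pow_add]; ring
    simp_rw [hfun]
    rw [← ENNReal.ofReal_tsum_of_nonneg (fun k => by positivity)
      ((summable_geometric_of_lt_one hq0 hq1).mul_left _)]
    congr 1
    rw [tsum_mul_left, tsum_geometric_of_lt_one hq0 hq1, h1q]
    field_simp
  -- indicator functions of survival events
  set g : ℕ → Ω → ℝ := fun i => Set.indicator {ω | i < N ω} (fun _ => (1 : ℝ)) with hgdef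
  have hgmeas : ∀ i, Measurable (g i) := fun i => measurable_const.indicator (hS i)
  have hgnn : ∀ i ω, 0 ≤ g i ω := fun i ω => Set.indicator_nonneg (fun _ _ => zero_le_one) ω
  have hgint : ∀ i, Integrable (g i) P := fun i => (integrable_const (1 : ℝ)).indicator (hS i)
  have hgval : ∀ i, ∫ ω, g i ω ∂P = q ^ (i + 1) := by
    intro i
    rw [hgdef]
    rw [integral_indicator_const (1 : ℝ) (hS i), measureReal_def, hPgt i,
      ENNReal.toReal_ofReal (by positivity), smul_eq_mul, mul_one]
  have hg1 : ∀ i ω, i < N ω → g i ω = 1 := fun i ω h =>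
    Set.indicator_of_mem (show ω ∈ {ω | i < N ω} from h) _
  have hg0 : ∀ i ω, ¬ i < N ω → g i ω = 0 := fun i ω h =>
    Set.indicator_of_notMem (show ω ∉ {ω | i < N ω} from h) _
  -- summability of geometric tails
  have hc1s : Summable (fun i : ℕ => q ^ (i + 1)) := by
    have : (fun i : ℕ => q ^ (i + 1)) = fun i : ℕ => q ^ i * q := funext fun i => pow_succ q i
    rw [this]
    exact (summable_geometric_of_lt_one hq0 hq1).mul_right q
  have hc1t : ∑' i : ℕ, q ^ (i + 1) = (s : ℝ) - 1 := by
    have h1 : (fun i : ℕ => q ^ (i + 1)) = fun i : ℕ => q ^ i * q := funext fun i => pow_succ q i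
    rw [h1, tsum_mul_right, tsum_geometric_of_lt_one hq0 hq1, h1q, hqdef]
    field_simp
  -- expectation of N
  have hhs1 : ∀ ω, HasSum (fun i => g i ω) ((N ω : ℝ)) := by
    intro ω
    have h0 : ∀ i ∉ Finset.range (N ω), g i ω = 0 := fun i hi =>
      hg0 i ω (by simpa using hi)
    have h : HasSum (fun i => g i ω) _ := hasSum_sum_of_ne_finset_zero h0
    have heq : ∑ i ∈ Finset.range (N ω), g i ω = (N ω : ℝ) := by
      rw [Finset.sum_congr rfl fun i hi => hg1 i ω (Finset.mem_range.1 hi)]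
      simp
    rwa [heq] at h
  obtain ⟨int1, eq1⟩ := aux_integral_tsum P g hgmeas hgnn hgint
    (fun i => q ^ (i + 1)) hgval hc1s (fun ω => (N ω : ℝ)) hhs1
  rw [hc1t] at eq1
  -- the escape-cost part
  set μ0 : ℝ := ((a : ℝ) * Ca / α + ((l : ℝ) - 1) * Cl / α + Cf * B * D / (b : ℝ)) / (s : ℝ)
    with hμ0def
  have hindep : ∀ i, IndepFun (Z i) (g i) P := by
    intro i
    have hφ : Measurable (fun v : ℕ → ℝ => v i) := measurable_pi_apply i
    have hψ : Measurable (fun n : ℕ => if i < n then (1 : ℝ) else 0) :=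
      measurable_of_countable _
    have h := hZN.comp hφ hψ
    have h1 : ((fun v : ℕ → ℝ => v i) ∘ (fun ω => fun j => Z j ω)) = Z i := rfl
    have h2 : ((fun n : ℕ => if i < n then (1 : ℝ) else 0) ∘ N) = g i := by
      funext ω
      by_cases hi : i < N ω
      · simp [Function.comp, hi, hg1 i ω hi]
      · simp [Function.comp, hi, hg0 i ω hi]
    rwa [h1, h2] at h
  have hf2meas : ∀ i, Measurable (fun ω => Z i ω * g i ω) := fun i =>
    (hZmeas i).mul (hgmeas i)
  have hf2nn : ∀ i ω, 0 ≤ Z i ω * g i ω := fun i ω => mul_nonneg (hZnn i ω) (hgnn i ω)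
  have hf2int : ∀ i, Integrable (fun ω => Z i ω * g i ω) P := fun i =>
    (hindep i).integrable_mul (hZint i) (hgint i)
  have hf2val : ∀ i, ∫ ω, Z i ω * g i ω ∂P = μ0 * q ^ (i + 1) := by
    intro i
    have h := (hindep i).integral_mul_eq_mul_integral (hZint i).1 (hgint i).1
    have h0 : ∫ ω, Z i ω * g i ω ∂P = ∫ ω, (Z i * g i) ω ∂P := rfl
    rw [h0, h, hZmean i, hgval i, hμ0def]
  have hc2s : Summable (fun i : ℕ => μ0 * q ^ (i + 1)) := hc1s.mul_left μ0
  have hhs2 : ∀ ω, HasSum (fun i => Z i ω * g i ω) (∑ i ∈ Finset.range (N ω), Z i ω) := by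
    intro ω
    have h0 : ∀ i ∉ Finset.range (N ω), Z i ω * g i ω = 0 := fun i hi => by
      rw [hg0 i ω (by simpa using hi), mul_zero]
    have h : HasSum (fun i => Z i ω * g i ω) _ := hasSum_sum_of_ne_finset_zero h0
    have heq : ∑ i ∈ Finset.range (N ω), Z i ω * g i ω
        = ∑ i ∈ Finset.range (N ω), Z i ω := by
      refine Finset.sum_congr rfl fun i hi => ?_
      rw [hg1 i ω (Finset.mem_range.1 hi), mul_one]
    rwa [heq] at h
  obtain ⟨int2, eq2⟩ := aux_integral_tsum P (fun i ω => Z i ω * g i ω) hf2meas hf2nn hf2int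
    (fun i => μ0 * q ^ (i + 1)) hf2val hc2s
    (fun ω => ∑ i ∈ Finset.range (N ω), Z i ω) hhs2
  have hc2t : ∑' i : ℕ, μ0 * q ^ (i + 1) = μ0 * ((s : ℝ) - 1) := by
    rw [tsum_mul_left, hc1t]
  rw [hc2t] at eq2
  -- put everything together
  have hTeq : T = fun ω => (Cs * D * α ^ (-4 : ℤ)) * ((N ω : ℝ) + 1)
      + ∑ i ∈ Finset.range (N ω), Z i ω := funext hT
  have intN1 : Integrable (fun ω => (N ω : ℝ) + 1) P := int1.add (integrable_const 1)
  constructor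
  · rw [hTeq]
    exact (intN1.const_mul _).add int2
  · rw [hTeq]
    rw [integral_add ((intN1.const_mul _)) int2, integral_const_mul,
      integral_add int1 (integrable_const 1), integral_const, eq1, eq2]
    simp only [measure_univ, probReal_univ, ENNReal.toReal_one, smul_eq_mul, mul_one, one_mul]
    rw [hμ0def]
    have hαne : α ≠ 0 := ne_of_gt hα
    field_simp
    ring
end
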